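/- For the quadratic V(x) = (1/2)⟨x, Ax⟩ - ⟨b, x⟩ with A symmetric and a^i_i > 0, the successive-over-relaxation (SOR) coordinate update y^{k,i} = y^{k,i-1} - (ω/a^i_i)(⟨a^i, y^{k,i-1}⟩ - b_i) e^i with ω ∈ (0,2) satisfies the scalar Itoh–Abe discrete gradient equation: with τ_i = 2ω/((2-ω)a^i_i), the increment z = y^{k,i}_i - y^{k,i-1}_i satisfies z = -τ_i (V(y^{k,i}) - V(y^{k,i-1}))/z whenever z ≠ 0. -/
import Mathlib


open Matrix

lemma quad_diff (m : ℕ) (A : Matrix (Fin m) (Fin m) ℝ) (hsym : A.IsSymm)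
    (b : Fin m → ℝ) (i : Fin m) (x : Fin m → ℝ) (z : ℝ) :
    (1 / 2) * ((x + z • (Pi.single i (1:ℝ) : Fin m → ℝ)) ⬝ᵥ A.mulVec (x + z • (Pi.single i (1:ℝ) : Fin m → ℝ))) - b ⬝ᵥ (x + z • (Pi.single i (1:ℝ) : Fin m → ℝ))
      - ((1 / 2) * (x ⬝ᵥ A.mulVec x) - b ⬝ᵥ x)
    = z * (A.mulVec x i - b i) + z^2 * (A i i) / 2 := by
  have hsx : ∀ j, A j i = A i j := fun j => hsym.apply i j
  simp only [dotProduct, mulVec, Pi.add_apply, Pi.smul_apply, smul_eq_mul,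
    Pi.single_apply, mul_ite, ite_mul, mul_one, mul_zero, zero_mul, one_mul,
    mul_add, add_mul, Finset.sum_add_distrib, Finset.sum_ite_eq', Finset.mem_univ, if_true]
  simp only [hsx]
  have h1 : ∑ j, x j * (A i j * z) = z * ∑ j, A i j * x j := by
    rw [Finset.mul_sum]; exact Finset.sum_congr rfl fun j _ => by ring
  rw [h1]; ring

/-- for the quadratic `V(x) = (1/2)⟨x, Ax⟩ - ⟨b, x⟩` with `A` symmetric and
`a^i_i > 0`, the SOR coordinate update with `ω ∈ (0,2)` satisfies the scalar Itoh–Abe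
discrete gradient equation with time step `τ_i = 2ω/((2-ω) a^i_i)`. -/
theorem sor_is_itoh_abe (m : ℕ) (A : Matrix (Fin m) (Fin m) ℝ) (hsym : A.IsSymm)
    (b : Fin m → ℝ) (V : (Fin m → ℝ) → ℝ)
    (hV : ∀ x : Fin m → ℝ, V x = (1 / 2) * (x ⬝ᵥ A.mulVec x) - b ⬝ᵥ x)
    (i : Fin m) (hAii : 0 < A i i)
    (ω : ℝ) (hω : ω ∈ Set.Ioo (0:ℝ) 2)
    (x : Fin m → ℝ) (z τ : ℝ)
    (hz : z = -(ω / A i i) * (A.mulVec x i - b i))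
    (hτ : τ = 2 * ω / ((2 - ω) * A i i))
    (hzne : z ≠ 0) :
    z = -τ * (V (x + z • (Pi.single i (1:ℝ) : Fin m → ℝ)) - V x) / z := by
  obtain ⟨hω0, hω2⟩ := hω
  have hA : A i i ≠ 0 := ne_of_gt hAii
  have hωne : ω ≠ 0 := ne_of_gt hω0
  have h2ω : (2 : ℝ) - ω ≠ 0 := by linarith
  have hdiff : V (x + z • (Pi.single i (1:ℝ) : Fin m → ℝ)) - V x
      = z * (A.mulVec x i - b i) + z^2 * (A i i) / 2 := by
    rw [hV, hV]; exact quad_diff m A hsym b i x z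
  have hg : A.mulVec x i - b i = -(A i i) * z / ω := by
    field_simp at hz ⊢
    linarith [hz]
  rw [hdiff, hg, hτ]
  field_simp
  ring
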